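/- Let q ∈ ℂ with q ∉ {0,1,2}. Then the following are equivalent: (i) there exists a series-parallel graph G with Z(G;q) = 0; (ii) there exists G ∈ 𝒢*_SP with Z^dif(G;q) ≠ 0 and Z^same(G;q) = −Z^dif(G;q) (i.e., the ratio R(G;q) = Z^same(G;q)/Z^dif(G;q) equals −1); (iii) there exists G ∈ 𝒢*_SP such that (Z^same(G;q), Z^dif(G;q)) ≠ (0,0) and Z^same(G;q)·Z^dif(G;q)·(Z^same(G;q) + Z^dif(G;q)) = 0 (i.e., the ratio R(G;q), viewed as a point of the Riemann sphere, lies in {0, −1, ∞}). -/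

import Mathlib

open Polynomial

noncomputable section

/-- A finite (undirected) multigraph: a finite vertex type, a finite edge index type,
and a map assigning to each edge its pair of endpoints. -/
structure Multigraph where
  V : Type
  E : Type
  [finV : Finite V]
  [finE : Fintype E]
  ends : E → V × V

attribute [instance] Multigraph.finV Multigraph.finE

namespace Multigraph

/-- The spanning subgraph `(V, F)` determined by a set `F` of edges, as a simple graph
recording adjacency. -/
def spanning (G : Multigraph) (F : Finset G.E) : SimpleGraph G.V where
  Adj u v := u ≠ v ∧ ∃ e ∈ F, G.ends e = (u, v) ∨ G.ends e = (v, u)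
  symm := ⟨by
    rintro u v ⟨huv, e, he, h⟩
    exact ⟨huv.symm, e, he, h.symm⟩⟩
  loopless := ⟨by rintro v ⟨hv, -⟩; exact hv rfl⟩

/-- `k(F)`: the number of connected components of the spanning subgraph `(V, F)`. -/
def k (G : Multigraph) (F : Finset G.E) : ℕ :=
  Nat.card (G.spanning F).ConnectedComponent

/-- The chromatic polynomial `Z(G;q) = ∑_{F ⊆ E} (-1)^{|F|} q^{k(F)}`. -/
def Z (G : Multigraph) : Polynomial ℂ :=
  ∑ F : Finset G.E, (-1 : Polynomial ℂ) ^ F.card * X ^ G.k F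

/-- A multigraph is loopless if no edge has equal endpoints. -/
def Loopless (G : Multigraph) : Prop := ∀ e : G.E, (G.ends e).1 ≠ (G.ends e).2

/-- The degree of a vertex: the number of edge-ends incident to it. -/
def degree (G : Multigraph) (x : G.V) : ℕ :=
  Nat.card {e : G.E // (G.ends e).1 = x} + Nat.card {e : G.E // (G.ends e).2 = x}

end Multigraph

/-- A two-terminal graph: a finite multigraph together with two distinct
distinguished vertices, the start vertex `s` and the end vertex `t`. -/
structure TTGraph extends Multigraph where
  s : V
  t : V
  hst : s ≠ t

namespace TTGraph

/-- The chromatic polynomial of (the underlying multigraph of) a two-terminal graph. -/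
def Z (G : TTGraph) : Polynomial ℂ := G.toMultigraph.Z

def Loopless (G : TTGraph) : Prop := G.toMultigraph.Loopless

/-- A single edge `K₂`, with its two endpoints as terminals. -/
def K2 : TTGraph where
  V := Bool
  E := Unit
  ends := fun _ => (false, true)
  s := false
  t := true
  hst := Bool.false_ne_true

/-- The identification map used in the parallel composition: `s₂ ↦ s₁`, `t₂ ↦ t₁`. -/
def parMap (G₁ G₂ : TTGraph) (x : G₂.V) :
    G₁.V ⊕ {y : G₂.V // y ≠ G₂.s ∧ y ≠ G₂.t} := by
  classical
  exact if h1 : x = G₂.s then Sum.inl G₁.s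
    else if h2 : x = G₂.t then Sum.inl G₁.t
    else Sum.inr ⟨x, h1, h2⟩

/-- Parallel composition of two-terminal graphs: the disjoint union with `s₁` and `s₂`
identified (the new start) and `t₁` and `t₂` identified (the new end). -/
def par (G₁ G₂ : TTGraph) : TTGraph where
  V := G₁.V ⊕ {y : G₂.V // y ≠ G₂.s ∧ y ≠ G₂.t}
  E := G₁.E ⊕ G₂.E
  ends := Sum.elim
    (fun e => (Sum.inl (G₁.ends e).1, Sum.inl (G₁.ends e).2))
    (fun e => (parMap G₁ G₂ (G₂.ends e).1, parMap G₁ G₂ (G₂.ends e).2))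
  s := Sum.inl G₁.s
  t := Sum.inl G₁.t
  hst := fun h => G₁.hst (Sum.inl.inj h)

/-- The identification map used in the series composition: `s₂ ↦ t₁`. -/
def serMap (G₁ G₂ : TTGraph) (x : G₂.V) :
    G₁.V ⊕ {y : G₂.V // y ≠ G₂.s} := by
  classical
  exact if h : x = G₂.s then Sum.inl G₁.t else Sum.inr ⟨x, h⟩

/-- Series composition of two-terminal graphs: the disjoint union with `t₁` and `s₂`
identified; the new start is `s₁` and the new end is `t₂`. -/
def ser (G₁ G₂ : TTGraph) : TTGraph where
  V := G₁.V ⊕ {y : G₂.V // y ≠ G₂.s}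
  E := G₁.E ⊕ G₂.E
  ends := Sum.elim
    (fun e => (Sum.inl (G₁.ends e).1, Sum.inl (G₁.ends e).2))
    (fun e => (serMap G₁ G₂ (G₂.ends e).1, serMap G₁ G₂ (G₂.ends e).2))
  s := Sum.inl G₁.s
  t := Sum.inr ⟨G₂.t, G₂.hst.symm⟩
  hst := Sum.inl_ne_inr

/-- `Z^dif(G;q) := Z(G ∥ K₂; q)`. -/
def Zdif (G : TTGraph) : Polynomial ℂ := (G.par K2).Z

/-- `Z^same(G;q) := Z(G;q) - Z^dif(G;q)`. -/
def Zsame (G : TTGraph) : Polynomial ℂ := G.Z - G.Zdif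

/-- Series-parallel two-terminal graphs: those obtained from a single edge `K₂` by
repeated series and parallel compositions. -/
inductive IsSP : TTGraph → Prop
  | K2 : IsSP K2
  | ser {G₁ G₂ : TTGraph} : IsSP G₁ → IsSP G₂ → IsSP (G₁.ser G₂)
  | par {G₁ G₂ : TTGraph} : IsSP G₁ → IsSP G₂ → IsSP (G₁.par G₂)

/-- No edge of `G` joins the two terminals (membership in `𝒢*_SP` for series-parallel `G`). -/
def NoSTEdge (G : TTGraph) : Prop :=
  ∀ e : G.E, G.ends e ≠ (G.s, G.t) ∧ G.ends e ≠ (G.t, G.s)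

end TTGraph


/-! ### Auxiliary development -/

namespace SPaux
open Finset

/-- Sum of `(-1)^|m|` over the powerset. -/
lemma sum_pow_neg_one {α : Type*} [DecidableEq α] (x : Finset α) :
    (∑ m ∈ x.powerset, (-1 : ℂ) ^ m.card) = if x = ∅ then 1 else 0 := by
  have h := Finset.sum_powerset_neg_one_pow_card (x := x)
  have h2 : ((∑ m ∈ x.powerset, (-1:ℤ)^m.card : ℤ) : ℂ) = if x = ∅ then 1 else 0 := by
    rw [h]; split <;> simp
  rw [← h2]; push_cast; rfl

lemma nat_card_sigma {ι : Type} [Fintype ι] (f : ι → Type) [∀ i, Finite (f i)] :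
    Nat.card (Σ i, f i) = ∑ i, Nat.card (f i) := by
  letI : ∀ i, Fintype (f i) := fun i => Fintype.ofFinite _
  simp [Nat.card_eq_fintype_card]

lemma poly_ext {p r : Polynomial ℂ} (h : ∀ n : ℕ, 2 ≤ n → p.eval (n:ℂ) = r.eval (n:ℂ)) :
    p = r := by
  apply Polynomial.eq_of_infinite_eval_eq
  have hinj : Function.Injective (fun k : ℕ => ((k + 2 : ℕ) : ℂ)) := by
    intro a b hab; simpa using hab
  have hsub : Set.range (fun k : ℕ => ((k + 2 : ℕ) : ℂ)) ⊆ {x | p.eval x = r.eval x} := by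
    rintro _ ⟨k, rfl⟩; exact h (k+2) (by omega)
  exact (Set.infinite_range_of_injective hinj).mono hsub

/-- Proper colorings of a multigraph with `n` colors. -/
abbrev Col (G : Multigraph) (n : ℕ) : Type :=
  {c : G.V → Fin n // ∀ e, c (G.ends e).1 ≠ c (G.ends e).2}

lemma card_forced (G : Multigraph) (n : ℕ) (F : Finset G.E) :
    Nat.card {c : G.V → Fin n // ∀ e ∈ F, c (G.ends e).1 = c (G.ends e).2}
      = n ^ G.k F := by
  classical
  have key : {c : G.V → Fin n // ∀ e ∈ F, c (G.ends e).1 = c (G.ends e).2}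
      ≃ ((G.spanning F).ConnectedComponent → Fin n) := by
    refine ⟨fun c => SimpleGraph.ConnectedComponent.lift c.1 ?_,
      fun g => ⟨fun v => g ((G.spanning F).connectedComponentMk v), ?_⟩, ?_, ?_⟩
    · have hadj : ∀ v w, (G.spanning F).Adj v w → c.1 v = c.1 w := by
        rintro v w ⟨hne, e, heF, h' | h'⟩
        · have hc := c.2 e heF; rw [h'] at hc; exact hc
        · have hc := c.2 e heF; rw [h'] at hc; exact hc.symm
      intro v w p hp
      clear hp
      induction p with
      | nil => rfl
      | cons h p ih => exact (hadj _ _ h).trans ih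
    · intro e he
      by_cases hveq : (G.ends e).1 = (G.ends e).2
      · rw [hveq]
      · exact congrArg g (SimpleGraph.ConnectedComponent.connectedComponentMk_eq_of_adj
          ⟨hveq, e, he, Or.inl (by simp)⟩)
    · intro c; rfl
    · intro g; funext x
      refine SimpleGraph.ConnectedComponent.ind (fun v => rfl) x
  rw [Nat.card_congr key, Nat.card_fun]
  simp [Multigraph.k, Nat.card_eq_fintype_card]

lemma Z_eval_nat (G : Multigraph) (n : ℕ) :
    (G.Z).eval (n : ℂ) = (Nat.card (Col G n) : ℂ) := by
  classical
  letI : Fintype G.V := Fintype.ofFinite _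
  have hM : ∀ F : Finset G.E, ((n : ℂ)) ^ G.k F
      = ∑ c : G.V → Fin n, (if ∀ e ∈ F, c (G.ends e).1 = c (G.ends e).2 then (1:ℂ) else 0) := by
    intro F
    have h1 := card_forced G n F
    rw [Nat.card_eq_fintype_card, Fintype.card_subtype] at h1
    calc ((n:ℂ)) ^ G.k F = ((n ^ G.k F : ℕ) : ℂ) := by push_cast; rfl
      _ = _ := by rw [← h1, ← Finset.sum_boole]
  have hZ : (G.Z).eval (n : ℂ)
      = ∑ F : Finset G.E, (-1 : ℂ) ^ F.card * (n : ℂ) ^ G.k F := by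
    simp [Multigraph.Z, eval_finset_sum]
  rw [hZ]
  have swap : ∑ F : Finset G.E, (-1 : ℂ) ^ F.card * (n:ℂ) ^ G.k F
      = ∑ c : G.V → Fin n, ∑ F : Finset G.E,
          (-1 : ℂ) ^ F.card * (if ∀ e ∈ F, c (G.ends e).1 = c (G.ends e).2 then (1:ℂ) else 0) := by
    rw [Finset.sum_comm]
    refine Finset.sum_congr rfl fun F _ => ?_
    rw [hM F, Finset.mul_sum]
  rw [swap]
  have inner : ∀ c : G.V → Fin n,
      (∑ F : Finset G.E, (-1 : ℂ) ^ F.card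
        * (if ∀ e ∈ F, c (G.ends e).1 = c (G.ends e).2 then (1:ℂ) else 0))
      = if ∀ e, c (G.ends e).1 ≠ c (G.ends e).2 then 1 else 0 := by
    intro c
    set Mc : Finset G.E := Finset.univ.filter (fun e => c (G.ends e).1 = c (G.ends e).2) with hMc
    have hstep : (∑ F : Finset G.E, (-1 : ℂ) ^ F.card
        * (if ∀ e ∈ F, c (G.ends e).1 = c (G.ends e).2 then (1:ℂ) else 0))
        = ∑ F ∈ Mc.powerset, (-1:ℂ)^F.card := by
      simp_rw [mul_ite, mul_one, mul_zero]
      rw [← Finset.sum_filter]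
      congr 1
      ext F
      simp only [Finset.mem_filter, Finset.mem_univ, true_and, Finset.mem_powerset, hMc]
      constructor
      · intro h e he; rw [Finset.mem_filter]; exact ⟨Finset.mem_univ _, h e he⟩
      · intro h e he; have := h he; rw [Finset.mem_filter] at this; exact this.2
    rw [hstep, sum_pow_neg_one]
    congr 1
    rw [eq_iff_iff]
    constructor
    · intro h e hc
      have hmem : e ∈ Mc := by rw [hMc, Finset.mem_filter]; exact ⟨Finset.mem_univ _, hc⟩
      rw [h] at hmem; exact absurd hmem (Finset.notMem_empty e)
    · intro h
      rw [hMc, Finset.filter_eq_empty_iff]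
      intro e _; exact h e
  calc ∑ c : G.V → Fin n, ∑ F : Finset G.E,
          (-1 : ℂ) ^ F.card * (if ∀ e ∈ F, c (G.ends e).1 = c (G.ends e).2 then (1:ℂ) else 0)
      = ∑ c : G.V → Fin n, (if ∀ e, c (G.ends e).1 ≠ c (G.ends e).2 then (1:ℂ) else 0) :=
        Finset.sum_congr rfl fun c _ => inner c
    _ = (Nat.card (Col G n) : ℂ) := by
        rw [Finset.sum_boole, Nat.card_eq_fintype_card, Fintype.card_subtype]

/-! ### Colorings with boundary conditions -/

abbrev ColST (G : TTGraph) (n : ℕ) (x y : Fin n) : Type :=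
  {c : G.V → Fin n //
    (∀ e, c (G.toMultigraph.ends e).1 ≠ c (G.toMultigraph.ends e).2) ∧ c G.s = x ∧ c G.t = y}

/-- `N(G;n;x,y)`: number of proper `n`-colorings with `c s = x`, `c t = y`. -/
def NC (G : TTGraph) (n : ℕ) (x y : Fin n) : ℕ := Nat.card (ColST G n x y)

abbrev ColD (G : TTGraph) (n : ℕ) : Type :=
  {c : G.V → Fin n //
    (∀ e, c (G.toMultigraph.ends e).1 ≠ c (G.toMultigraph.ends e).2) ∧ c G.s ≠ c G.t}

lemma card_fiber_sum {α : Type} [Finite α] {n : ℕ} (f : α → Fin n × Fin n) :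
    Nat.card α = ∑ p : Fin n × Fin n, Nat.card {a : α // f a = p} := by
  rw [← nat_card_sigma (fun p : Fin n × Fin n => {a : α // f a = p})]
  exact (Nat.card_congr (Equiv.sigmaFiberEquiv f)).symm

lemma Z_eval_sum (G : TTGraph) (n : ℕ) :
    (G.Z).eval (n : ℂ) = ∑ x : Fin n, ∑ y : Fin n, (NC G n x y : ℂ) := by
  rw [show G.Z = G.toMultigraph.Z from rfl, Z_eval_nat]
  rw [card_fiber_sum (fun c : Col G.toMultigraph n => (c.1 G.s, c.1 G.t))]
  push_cast
  rw [Fintype.sum_prod_type]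
  refine Finset.sum_congr rfl fun x _ => Finset.sum_congr rfl fun y _ => ?_
  congr 1
  unfold NC
  refine Nat.card_congr ⟨fun c => ⟨c.1.1, c.1.2, ?_, ?_⟩, fun c => ⟨⟨c.1, c.2.1⟩, ?_⟩, fun c => rfl, fun c => rfl⟩
  · exact congrArg Prod.fst c.2
  · exact congrArg Prod.snd c.2
  · exact Prod.ext c.2.2.1 c.2.2.2

/-! ### parMap and serMap lemmas -/

open TTGraph

lemma parMap_s (G₁ G₂ : TTGraph) : parMap G₁ G₂ G₂.s = Sum.inl G₁.s := by
  unfold parMap; simp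

lemma parMap_t (G₁ G₂ : TTGraph) : parMap G₁ G₂ G₂.t = Sum.inl G₁.t := by
  unfold parMap; rw [dif_neg G₂.hst.symm, dif_pos rfl]

lemma parMap_other (G₁ G₂ : TTGraph) (x : G₂.V) (h1 : x ≠ G₂.s) (h2 : x ≠ G₂.t) :
    parMap G₁ G₂ x = Sum.inr ⟨x, h1, h2⟩ := by
  unfold parMap; rw [dif_neg h1, dif_neg h2]

lemma serMap_s (G₁ G₂ : TTGraph) : serMap G₁ G₂ G₂.s = Sum.inl G₁.t := by
  unfold serMap; simp

lemma serMap_other (G₁ G₂ : TTGraph) (x : G₂.V) (h1 : x ≠ G₂.s) :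
    serMap G₁ G₂ x = Sum.inr ⟨x, h1⟩ := by
  unfold serMap; rw [dif_neg h1]

lemma hempty_K2 (y : {b : Bool // b ≠ K2.s ∧ b ≠ K2.t}) : False := by
  rcases y with ⟨b, h1, h2⟩
  cases b
  · exact h1 rfl
  · exact h2 rfl

lemma Zdif_eval (G : TTGraph) (n : ℕ) :
    (G.Zdif).eval (n : ℂ) = ∑ x : Fin n, ∑ y : Fin n,
      (if x = y then 0 else (NC G n x y : ℂ)) := by
  classical
  have h1 : parMap G K2 false = Sum.inl G.s := parMap_s G K2
  have h2 : parMap G K2 true = Sum.inl G.t := parMap_t G K2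
  have E1 : Col (G.par K2).toMultigraph n ≃ ColD G n := by
    refine ⟨fun c => ⟨fun v => c.1 (Sum.inl v), fun e => c.2 (Sum.inl e), ?_⟩,
            fun d => ⟨Sum.elim d.1 (fun y => (hempty_K2 y).elim), ?_⟩, ?_, ?_⟩
    · have hp : c.1 (parMap G K2 false) ≠ c.1 (parMap G K2 true) := c.2 (Sum.inr ())
      rw [h1, h2] at hp
      exact hp
    · rintro (e | e)
      · exact d.2.1 e
      · show Sum.elim d.1 _ (parMap G K2 false) ≠ Sum.elim d.1 _ (parMap G K2 true)
        rw [h1, h2]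
        exact d.2.2
    · intro c
      apply Subtype.ext
      funext v
      rcases v with w | y
      · rfl
      · exact (hempty_K2 y).elim
    · intro d
      apply Subtype.ext
      rfl
  have : (G.Zdif).eval (n : ℂ) = (Nat.card (ColD G n) : ℂ) := by
    rw [show G.Zdif = (G.par K2).toMultigraph.Z from rfl, Z_eval_nat, Nat.card_congr E1]
  rw [this, card_fiber_sum (fun c : ColD G n => (c.1 G.s, c.1 G.t))]
  push_cast
  rw [Fintype.sum_prod_type]
  refine Finset.sum_congr rfl fun x _ => Finset.sum_congr rfl fun y _ => ?_
  by_cases hxy : x = y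
  · rw [if_pos hxy]
    have : IsEmpty {a : ColD G n // (a.1 G.s, a.1 G.t) = (x, y)} := by
      constructor
      rintro ⟨a, ha⟩
      apply a.2.2
      have hx := congrArg Prod.fst ha
      have hy := congrArg Prod.snd ha
      simp only at hx hy
      rw [hx, hy, hxy]
    rw [Nat.card_of_isEmpty]
    norm_num
  · rw [if_neg hxy]
    congr 1
    unfold NC
    apply Nat.card_congr
    refine ⟨fun a => ⟨a.1.1, a.1.2.1, congrArg Prod.fst a.2, congrArg Prod.snd a.2⟩,
            fun c => ⟨⟨c.1, c.2.1, ?_⟩, Prod.ext c.2.2.1 c.2.2.2⟩,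
            fun a => rfl, fun c => rfl⟩
    rw [c.2.2.1, c.2.2.2]
    exact hxy

lemma Zsame_eval (G : TTGraph) (n : ℕ) :
    (G.Zsame).eval (n : ℂ) = ∑ x : Fin n, (NC G n x x : ℂ) := by
  have : G.Zsame = G.Z - G.Zdif := rfl
  rw [this, eval_sub, Z_eval_sum, Zdif_eval]
  rw [← Finset.sum_sub_distrib]
  have : ∀ x : Fin n, (∑ y : Fin n, (NC G n x y : ℂ))
      - (∑ y : Fin n, if x = y then 0 else (NC G n x y : ℂ))
      = (NC G n x x : ℂ) := by
    intro x
    rw [← Finset.sum_sub_distrib]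
    have : ∀ y : Fin n, (NC G n x y : ℂ) - (if x = y then 0 else (NC G n x y : ℂ))
        = if x = y then (NC G n x y : ℂ) else 0 := by
      intro y; split <;> ring
    rw [Finset.sum_congr rfl fun y _ => this y]
    simp
  exact Finset.sum_congr rfl fun x _ => this x

/-! ### Composition rules for `NC` -/

lemma NC_par (A B : TTGraph) (n : ℕ) (x y : Fin n) :
    NC (A.par B) n x y = NC A n x y * NC B n x y := by
  classical
  unfold NC
  rw [← Nat.card_prod]
  apply Nat.card_congr
  have key : ∀ (cA : A.V → Fin n) (cB : B.V → Fin n), cA A.s = cB B.s → cA A.t = cB B.t →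
      ∀ v : B.V, Sum.elim cA (fun w => cB w.1) (parMap A B v) = cB v := by
    intro cA cB hs ht v
    by_cases hv1 : v = B.s
    · subst hv1; rw [parMap_s]; exact hs
    · by_cases hv2 : v = B.t
      · subst hv2; rw [parMap_t]; exact ht
      · rw [parMap_other A B v hv1 hv2]
        rfl
  refine ⟨fun c => ⟨⟨fun v => c.1 (Sum.inl v), fun e => c.2.1 (Sum.inl e), c.2.2.1, c.2.2.2⟩,
                    ⟨fun v => c.1 (parMap A B v), fun e => c.2.1 (Sum.inr e), ?_, ?_⟩⟩,
          fun cc => ⟨Sum.elim cc.1.1 (fun w => cc.2.1 w.1), ?_, ?_, ?_⟩, ?_, ?_⟩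
  · show c.1 (parMap A B B.s) = x
    rw [parMap_s]; exact c.2.2.1
  · show c.1 (parMap A B B.t) = y
    rw [parMap_t]; exact c.2.2.2
  · rintro (e | e)
    · exact cc.1.2.1 e
    · have hk := key cc.1.1 cc.2.1 (by rw [cc.1.2.2.1, cc.2.2.2.1]) (by rw [cc.1.2.2.2, cc.2.2.2.2])
      show Sum.elim _ _ (parMap A B (B.toMultigraph.ends e).1)
        ≠ Sum.elim _ _ (parMap A B (B.toMultigraph.ends e).2)
      rw [hk, hk]
      exact cc.2.2.1 e
  · exact cc.1.2.2.1
  · exact cc.1.2.2.2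
  · intro c
    apply Subtype.ext
    funext v
    rcases v with w | ⟨w, hw1, hw2⟩
    · rfl
    · show c.1 (parMap A B w) = c.1 (Sum.inr ⟨w, hw1, hw2⟩)
      rw [parMap_other A B w hw1 hw2]
  · intro cc
    have hk := key cc.1.1 cc.2.1 (by rw [cc.1.2.2.1, cc.2.2.2.1]) (by rw [cc.1.2.2.2, cc.2.2.2.2])
    refine Prod.ext (Subtype.ext ?_) (Subtype.ext ?_)
    · rfl
    · funext v
      exact hk v

lemma card_fiber_sum' {α : Type} [Finite α] {n : ℕ} (f : α → Fin n) :
    Nat.card α = ∑ z : Fin n, Nat.card {a : α // f a = z} := by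
  rw [← nat_card_sigma (fun z : Fin n => {a : α // f a = z})]
  exact (Nat.card_congr (Equiv.sigmaFiberEquiv f)).symm

lemma NC_ser (A B : TTGraph) (n : ℕ) (x y : Fin n) :
    NC (A.ser B) n x y = ∑ z : Fin n, NC A n x z * NC B n z y := by
  classical
  unfold NC
  rw [card_fiber_sum' (fun c : ColST (A.ser B) n x y => c.1 (Sum.inl A.t))]
  refine Finset.sum_congr rfl fun z _ => ?_
  rw [← Nat.card_prod]
  apply Nat.card_congr
  have key : ∀ (cA : A.V → Fin n) (cB : B.V → Fin n), cA A.t = cB B.s →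
      ∀ v : B.V, Sum.elim cA (fun w => cB w.1) (serMap A B v) = cB v := by
    intro cA cB hs v
    by_cases hv1 : v = B.s
    · subst hv1; rw [serMap_s]; exact hs
    · rw [serMap_other A B v hv1]; rfl
  refine ⟨fun c => ⟨⟨fun v => c.1.1 (Sum.inl v), fun e => c.1.2.1 (Sum.inl e), c.1.2.2.1, c.2⟩,
            ⟨fun v => c.1.1 (serMap A B v), fun e => c.1.2.1 (Sum.inr e), ?_, ?_⟩⟩,
          fun cc => ⟨⟨Sum.elim cc.1.1 (fun w : {v : B.V // v ≠ B.s} => cc.2.1 w.1), ?_, ?_, ?_⟩, ?_⟩,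
          ?_, ?_⟩
  · show c.1.1 (serMap A B B.s) = z
    rw [serMap_s]; exact c.2
  · show c.1.1 (serMap A B B.t) = y
    rw [serMap_other A B B.t B.hst.symm]; exact c.1.2.2.2
  · rintro (e | e)
    · exact cc.1.2.1 e
    · have hk := key cc.1.1 cc.2.1 (by rw [cc.1.2.2.2, cc.2.2.2.1])
      show Sum.elim _ _ (serMap A B (B.toMultigraph.ends e).1)
        ≠ Sum.elim _ _ (serMap A B (B.toMultigraph.ends e).2)
      rw [hk, hk]
      exact cc.2.2.1 e
  · exact cc.1.2.2.1
  · show Sum.elim cc.1.1 (fun w : {v : B.V // v ≠ B.s} => cc.2.1 w.1) (Sum.inr ⟨B.t, B.hst.symm⟩) = y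
    exact cc.2.2.2.2
  · exact cc.1.2.2.2
  · intro c
    apply Subtype.ext
    apply Subtype.ext
    funext v
    rcases v with w | ⟨w, hw1⟩
    · rfl
    · show c.1.1 (serMap A B w) = c.1.1 (Sum.inr ⟨w, hw1⟩)
      rw [serMap_other A B w hw1]
  · intro cc
    have hk := key cc.1.1 cc.2.1 (by rw [cc.1.2.2.2, cc.2.2.2.1])
    exact Prod.ext (Subtype.ext rfl) (Subtype.ext (funext hk))

lemma NC_perm (G : TTGraph) (n : ℕ) (x y : Fin n) (σ : Equiv.Perm (Fin n)) :
    NC G n x y = NC G n (σ x) (σ y) := by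
  unfold NC
  apply Nat.card_congr
  refine ⟨fun c => ⟨fun v => σ (c.1 v), fun e h => c.2.1 e (σ.injective h),
            congrArg σ c.2.2.1, congrArg σ c.2.2.2⟩,
          fun c => ⟨fun v => σ.symm (c.1 v), fun e h => c.2.1 e (σ.symm.injective h),
            by show σ.symm (c.1 G.s) = x; rw [c.2.2.1, Equiv.symm_apply_apply],
            by show σ.symm (c.1 G.t) = y; rw [c.2.2.2, Equiv.symm_apply_apply]⟩,
          fun c => Subtype.ext (funext fun v => Equiv.symm_apply_apply _ _),
          fun c => Subtype.ext (funext fun v => Equiv.apply_symm_apply _ _)⟩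

lemma NC_K2 (n : ℕ) (x y : Fin n) :
    NC K2 n x y = if x = y then 0 else 1 := by
  classical
  unfold NC
  by_cases hxy : x = y
  · rw [if_pos hxy]
    have : IsEmpty (ColST K2 n x y) := by
      constructor
      rintro ⟨c, hp, hs, ht⟩
      exact hp () (by rw [show c (K2.toMultigraph.ends ()).1 = x from hs,
        show c (K2.toMultigraph.ends ()).2 = y from ht, hxy])
    rw [Nat.card_of_isEmpty]
  · rw [if_neg hxy]
    have : Unique (ColST K2 n x y) := by
      refine ⟨⟨⟨fun b : Bool => (Bool.rec x y b : Fin n), fun e h => hxy (by exact h), rfl, rfl⟩⟩, ?_⟩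
      rintro ⟨c, hp, hs, ht⟩
      apply Subtype.ext
      funext b
      cases b
      · exact hs
      · exact ht
    rw [Nat.card_unique]

/-! ### Symmetry of `NC` in the colors -/

lemma exists_perm {n : ℕ} {x y x' y' : Fin n} (h : x ≠ y) (h' : x' ≠ y') :
    ∃ σ : Equiv.Perm (Fin n), σ x = x' ∧ σ y = y' := by
  classical
  refine ⟨(Equiv.swap x x').trans (Equiv.swap ((Equiv.swap x x') y) y'), ?_, ?_⟩
  · rw [Equiv.trans_apply, Equiv.swap_apply_left]
    apply Equiv.swap_apply_of_ne_of_ne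
    · intro hc
      apply h
      apply (Equiv.swap x x').injective
      rw [Equiv.swap_apply_left]
      exact hc
    · exact h'
  · rw [Equiv.trans_apply, Equiv.swap_apply_left]

lemma NC_diag_const (G : TTGraph) {n : ℕ} (x z : Fin n) : NC G n x x = NC G n z z := by
  classical
  have := NC_perm G n x x (Equiv.swap x z)
  rwa [Equiv.swap_apply_left] at this

lemma NC_offdiag_const (G : TTGraph) {n : ℕ} {x y x' y' : Fin n} (h : x ≠ y) (h' : x' ≠ y') :
    NC G n x y = NC G n x' y' := by
  obtain ⟨σ, hs, ht⟩ := exists_perm h h'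
  have := NC_perm G n x y σ
  rwa [hs, ht] at this

lemma NC_symm (G : TTGraph) {n : ℕ} (x y : Fin n) : NC G n x y = NC G n y x := by
  classical
  by_cases h : x = y
  · rw [h]
  · have := NC_perm G n x y (Equiv.swap x y)
    rwa [Equiv.swap_apply_left, Equiv.swap_apply_right] at this

lemma NC_col_const (G : TTGraph) {n : ℕ} (z z' : Fin n) :
    (∑ x : Fin n, NC G n x z) = ∑ x : Fin n, NC G n x z' := by
  classical
  have h1 : ∀ x : Fin n, NC G n x z = NC G n (Equiv.swap z z' x) z' := by
    intro x
    have := NC_perm G n x z (Equiv.swap z z')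
    rwa [Equiv.swap_apply_left] at this
  rw [Finset.sum_congr rfl fun x _ => h1 x]
  exact Equiv.sum_comp (Equiv.swap z z') (fun x => NC G n x z')

lemma NC_row_const (G : TTGraph) {n : ℕ} (z z' : Fin n) :
    (∑ y : Fin n, NC G n z y) = ∑ y : Fin n, NC G n z' y := by
  classical
  have h1 : ∀ y : Fin n, NC G n z y = NC G n z' (Equiv.swap z z' y) := by
    intro y
    have := NC_perm G n z y (Equiv.swap z z')
    rwa [Equiv.swap_apply_left] at this
  rw [Finset.sum_congr rfl fun y _ => h1 y]
  exact Equiv.sum_comp (Equiv.swap z z') (fun y => NC G n z' y)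

/-! ### Polynomial identities -/

lemma sum_offdiag {n : ℕ} (C : ℂ) :
    (∑ x : Fin n, ∑ y : Fin n, if x = y then 0 else C) = (n:ℂ) * ((n:ℂ) - 1) * C := by
  classical
  have inner : ∀ x : Fin n, (∑ y : Fin n, if x = y then (0:ℂ) else C) = ((n:ℂ) - 1) * C := by
    intro x
    have : ∀ y : Fin n, (if x = y then (0:ℂ) else C) = C - (if x = y then C else 0) := by
      intro y; split <;> ring
    rw [Finset.sum_congr rfl fun y _ => this y, Finset.sum_sub_distrib, Finset.sum_const,
      Finset.sum_ite_eq, if_pos (Finset.mem_univ x)]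
    simp [Finset.card_univ]
    ring
  rw [Finset.sum_congr rfl fun x _ => inner x, Finset.sum_const]
  simp [Finset.card_univ]
  ring

lemma P5 (G : TTGraph) (e : G.E)
    (h : G.toMultigraph.ends e = (G.s, G.t) ∨ G.toMultigraph.ends e = (G.t, G.s)) :
    G.Zsame = 0 := by
  apply poly_ext
  intro n _
  rw [Zsame_eval, eval_zero]
  apply Finset.sum_eq_zero
  intro x _
  have : IsEmpty (ColST G n x x) := by
    constructor
    rintro ⟨c, hp, hs, ht⟩
    rcases h with h | h
    · exact hp e (by rw [h]; show c G.s = c G.t; rw [hs, ht])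
    · exact hp e (by rw [h]; show c G.t = c G.s; rw [hs, ht])
  unfold NC
  rw [Nat.card_of_isEmpty]
  norm_num

lemma P6 : (TTGraph.K2).Z = X^2 - X := by
  apply poly_ext
  intro n _
  have : (TTGraph.K2).Z = TTGraph.K2.toMultigraph.Z := rfl
  rw [show (TTGraph.K2).Z = TTGraph.K2.toMultigraph.Z from rfl]
  rw [show TTGraph.K2.toMultigraph.Z = TTGraph.Z TTGraph.K2 from rfl, Z_eval_sum]
  have : ∀ x y : Fin n, (NC K2 n x y : ℂ) = if x = y then 0 else 1 := by
    intro x y; rw [NC_K2]; split <;> simp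
  rw [Finset.sum_congr rfl fun x _ => Finset.sum_congr rfl fun y _ => this x y, sum_offdiag]
  simp
  ring

lemma ZsameK2 : (TTGraph.K2).Zsame = 0 :=
  P5 TTGraph.K2 () (Or.inl rfl)

lemma Zdif_eq (G : TTGraph) : G.Zdif = G.Z - G.Zsame := by
  show G.Zdif = G.Z - (G.Z - G.Zdif); ring

lemma ZdifK2 : (TTGraph.K2).Zdif = X^2 - X := by
  rw [Zdif_eq, ZsameK2, P6]; ring

lemma P1 (A B : TTGraph) : X * (A.par B).Zsame = A.Zsame * B.Zsame := by
  apply poly_ext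
  intro n hn
  rw [eval_mul, eval_mul, eval_X, Zsame_eval, Zsame_eval, Zsame_eval]
  have o : Fin n := ⟨0, by omega⟩
  have hdiag : ∀ (G : TTGraph) (x : Fin n), (NC G n x x : ℂ) = (NC G n o o : ℂ) := by
    intro G x; exact_mod_cast NC_diag_const G x o
  have hs : ∀ G : TTGraph, (∑ x : Fin n, (NC G n x x : ℂ)) = (n : ℂ) * NC G n o o := by
    intro G
    rw [Finset.sum_congr rfl fun x _ => hdiag G x, Finset.sum_const]
    simp [Finset.card_univ]
  rw [hs, hs, hs]
  have hpar : ∀ x y : Fin n, (NC (A.par B) n x y : ℂ) = (NC A n x y : ℂ) * NC B n x y := by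
    intro x y; exact_mod_cast NC_par A B n x y
  rw [hpar]
  ring

lemma P2 (A B : TTGraph) : X * (X - 1) * (A.par B).Zdif = A.Zdif * B.Zdif := by
  apply poly_ext
  intro n hn
  simp only [eval_mul, eval_sub, eval_X, eval_one]
  rw [Zdif_eval, Zdif_eval, Zdif_eval]
  obtain ⟨o, i, hoi⟩ : ∃ o i : Fin n, o ≠ i :=
    ⟨⟨0, by omega⟩, ⟨1, by omega⟩, by
      intro hc
      have := congrArg Fin.val hc
      simp at this⟩
  have hoff : ∀ (G : TTGraph) {x y : Fin n}, x ≠ y → (NC G n x y : ℂ) = (NC G n o i : ℂ) := by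
    intro G x y h; exact_mod_cast NC_offdiag_const G h hoi
  have hs : ∀ G : TTGraph, (∑ x : Fin n, ∑ y : Fin n, if x = y then 0 else (NC G n x y : ℂ))
      = (n:ℂ) * ((n:ℂ) - 1) * NC G n o i := by
    intro G
    rw [← sum_offdiag (n := n) ((NC G n o i : ℕ) : ℂ)]
    refine Finset.sum_congr rfl fun x _ => Finset.sum_congr rfl fun y _ => ?_
    by_cases h : x = y
    · rw [if_pos h, if_pos h]
    · rw [if_neg h, if_neg h, hoff G h]
  rw [hs, hs, hs]
  have hpar : (NC (A.par B) n o i : ℂ) = (NC A n o i : ℂ) * NC B n o i := by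
    exact_mod_cast NC_par A B n o i
  rw [hpar]
  ring

lemma P3 (A B : TTGraph) : X * (A.ser B).Z = A.Z * B.Z := by
  apply poly_ext
  intro n hn
  rw [eval_mul, eval_mul, eval_X, Z_eval_sum, Z_eval_sum, Z_eval_sum]
  have o : Fin n := ⟨0, by omega⟩
  have hser : ∀ x y : Fin n, (NC (A.ser B) n x y : ℂ)
      = ∑ z : Fin n, (NC A n x z : ℂ) * NC B n z y := by
    intro x y
    rw [show ((NC (A.ser B) n x y : ℕ) : ℂ) = ((∑ z : Fin n, NC A n x z * NC B n z y : ℕ) : ℂ)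
      from congrArg (fun k : ℕ => (k : ℂ)) (NC_ser A B n x y)]
    push_cast
    rfl
  have colA : ∀ z : Fin n, (∑ x : Fin n, (NC A n x z : ℂ)) = ∑ x : Fin n, (NC A n x o : ℂ) := by
    intro z; exact_mod_cast NC_col_const A z o
  have rowB : ∀ z : Fin n, (∑ y : Fin n, (NC B n z y : ℂ)) = ∑ y : Fin n, (NC B n o y : ℂ) := by
    intro z; exact_mod_cast NC_row_const B z o
  set CA : ℂ := ∑ x : Fin n, (NC A n x o : ℂ) with hCA
  set CB : ℂ := ∑ y : Fin n, (NC B n o y : ℂ) with hCB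
  have hL : (∑ x : Fin n, ∑ y : Fin n, (NC (A.ser B) n x y : ℂ)) = (n:ℂ) * (CA * CB) := by
    rw [Finset.sum_congr rfl fun x _ => Finset.sum_congr rfl fun y _ => hser x y]
    have swap1 : ∀ x : Fin n, (∑ y : Fin n, ∑ z : Fin n, (NC A n x z : ℂ) * NC B n z y)
        = ∑ z : Fin n, ∑ y : Fin n, (NC A n x z : ℂ) * NC B n z y := fun x => Finset.sum_comm
    rw [Finset.sum_congr rfl fun x _ => swap1 x, Finset.sum_comm]
    have inner : ∀ z : Fin n, (∑ x : Fin n, ∑ y : Fin n, (NC A n x z : ℂ) * NC B n z y)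
        = CA * CB := by
      intro z
      have : ∀ x : Fin n, (∑ y : Fin n, (NC A n x z : ℂ) * NC B n z y)
          = (NC A n x z : ℂ) * ∑ y : Fin n, (NC B n z y : ℂ) := fun x => by
        rw [Finset.mul_sum]
      rw [Finset.sum_congr rfl fun x _ => this x, ← Finset.sum_mul, colA z, rowB z]
    rw [Finset.sum_congr rfl fun z _ => inner z, Finset.sum_const]
    simp [Finset.card_univ]
  have hA : (∑ x : Fin n, ∑ y : Fin n, (NC A n x y : ℂ)) = (n:ℂ) * CA := by
    rw [Finset.sum_comm, Finset.sum_congr rfl fun y _ => colA y, Finset.sum_const]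
    simp [Finset.card_univ]
  have hB : (∑ x : Fin n, ∑ y : Fin n, (NC B n x y : ℂ)) = (n:ℂ) * CB := by
    rw [Finset.sum_congr rfl fun x _ => rowB x, Finset.sum_const]
    simp [Finset.card_univ]
  rw [hL, hA, hB]
  ring

lemma P4 (A B : TTGraph) : (A.ser B).Zsame = (A.par B).Z := by
  apply poly_ext
  intro n hn
  rw [Zsame_eval, Z_eval_sum]
  have hser : ∀ x : Fin n, (NC (A.ser B) n x x : ℂ)
      = ∑ z : Fin n, (NC A n x z : ℂ) * NC B n z x := by
    intro x
    rw [show ((NC (A.ser B) n x x : ℕ) : ℂ) = ((∑ z : Fin n, NC A n x z * NC B n z x : ℕ) : ℂ)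
      from congrArg _ (NC_ser A B n x x)]
    push_cast
    rfl
  rw [Finset.sum_congr rfl fun x _ => hser x]
  refine Finset.sum_congr rfl fun x _ => Finset.sum_congr rfl fun z _ => ?_
  have h1 : (NC B n z x : ℂ) = NC B n x z := by exact_mod_cast NC_symm B z x
  have h2 : (NC (A.par B) n x z : ℂ) = (NC A n x z : ℂ) * NC B n x z := by
    exact_mod_cast NC_par A B n x z
  rw [h2, h1]

/-! ### NoSTEdge lemmas -/

lemma serMap_ne_inl_s (A B : TTGraph) (w : B.V) : serMap A B w ≠ Sum.inl A.s := by
  by_cases hw : w = B.s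
  · subst hw
    rw [serMap_s]
    intro hc
    exact A.hst (Sum.inl.inj hc).symm
  · rw [serMap_other A B w hw]
    exact fun hc => Sum.inr_ne_inl hc

lemma noSTEdge_ser (A B : TTGraph) : (A.ser B).NoSTEdge := by
  rintro (e | e)
  · constructor
    · intro hc
      exact Sum.inl_ne_inr (congrArg Prod.snd hc)
    · intro hc
      exact Sum.inl_ne_inr (congrArg Prod.fst hc)
  · constructor
    · intro hc
      exact serMap_ne_inl_s A B _ (congrArg Prod.fst hc)
    · intro hc
      exact serMap_ne_inl_s A B _ (congrArg Prod.snd hc)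

lemma parMap_eq_inl_s (A B : TTGraph) (w : B.V) (h : parMap A B w = Sum.inl A.s) : w = B.s := by
  by_cases hw : w = B.s
  · exact hw
  · by_cases hw2 : w = B.t
    · subst hw2
      rw [parMap_t] at h
      exact absurd (Sum.inl.inj h).symm A.hst
    · rw [parMap_other A B w hw hw2] at h
      exact (Sum.inr_ne_inl h).elim

lemma parMap_eq_inl_t (A B : TTGraph) (w : B.V) (h : parMap A B w = Sum.inl A.t) : w = B.t := by
  by_cases hw2 : w = B.t
  · exact hw2
  · by_cases hw : w = B.s
    · subst hw
      rw [parMap_s] at h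
      exact absurd (Sum.inl.inj h) A.hst
    · rw [parMap_other A B w hw hw2] at h
      exact (Sum.inr_ne_inl h).elim

lemma noSTEdge_par (A B : TTGraph) (hA : A.NoSTEdge) (hB : B.NoSTEdge) :
    (A.par B).NoSTEdge := by
  rintro (e | e)
  · constructor
    · intro hc
      apply (hA e).1
      exact Prod.ext (Sum.inl.inj (congrArg Prod.fst hc)) (Sum.inl.inj (congrArg Prod.snd hc))
    · intro hc
      apply (hA e).2
      exact Prod.ext (Sum.inl.inj (congrArg Prod.fst hc)) (Sum.inl.inj (congrArg Prod.snd hc))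
  · constructor
    · intro hc
      apply (hB e).1
      exact Prod.ext (parMap_eq_inl_s A B _ (congrArg Prod.fst hc))
        (parMap_eq_inl_t A B _ (congrArg Prod.snd hc))
    · intro hc
      apply (hB e).2
      exact Prod.ext (parMap_eq_inl_t A B _ (congrArg Prod.fst hc))
        (parMap_eq_inl_s A B _ (congrArg Prod.snd hc))

lemma noSTEdge_par_parts (A B : TTGraph) (h : (A.par B).NoSTEdge) :
    A.NoSTEdge ∧ B.NoSTEdge := by
  constructor
  · intro e
    constructor
    · intro hc
      apply (h (Sum.inl e)).1
      show (Sum.inl (A.toMultigraph.ends e).1, Sum.inl (A.toMultigraph.ends e).2) = _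
      rw [hc]
      rfl
    · intro hc
      apply (h (Sum.inl e)).2
      show (Sum.inl (A.toMultigraph.ends e).1, Sum.inl (A.toMultigraph.ends e).2) = _
      rw [hc]
      rfl
  · intro e
    constructor
    · intro hc
      apply (h (Sum.inr e)).1
      show (parMap A B (B.toMultigraph.ends e).1, parMap A B (B.toMultigraph.ends e).2) = _
      rw [hc]
      show (parMap A B B.s, parMap A B B.t) = _
      rw [parMap_s, parMap_t]
      rfl
    · intro hc
      apply (h (Sum.inr e)).2
      show (parMap A B (B.toMultigraph.ends e).1, parMap A B (B.toMultigraph.ends e).2) = _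
      rw [hc]
      show (parMap A B B.t, parMap A B B.s) = _
      rw [parMap_s, parMap_t]
      rfl

lemma noSTEdge_of_Zsame_ne (G : TTGraph) (q : ℂ) (h : (G.Zsame).eval q ≠ 0) :
    G.NoSTEdge := by
  by_contra hc
  unfold TTGraph.NoSTEdge at hc
  push_neg at hc
  obtain ⟨e, he⟩ := hc
  have hor : G.toMultigraph.ends e = (G.s, G.t) ∨ G.toMultigraph.ends e = (G.t, G.s) := by
    by_cases h1 : G.toMultigraph.ends e = (G.s, G.t)
    · exact Or.inl h1
    · exact Or.inr (he h1)
  have : G.Zsame = 0 := P5 G e hor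
  rw [this] at h
  exact h (by simp)

lemma sp_nonempty {G : TTGraph} (h : G.IsSP) : Nonempty G.E := by
  induction h with
  | K2 => exact ⟨()⟩
  | ser h1 h2 ih1 ih2 => obtain ⟨e⟩ := ih1; exact ⟨Sum.inl e⟩
  | par h1 h2 ih1 ih2 => obtain ⟨e⟩ := ih1; exact ⟨Sum.inl e⟩

lemma sp_card_pos {G : TTGraph} (h : G.IsSP) : 1 ≤ Fintype.card G.E := by
  have := sp_nonempty h
  exact Fintype.card_pos

/-! ### Evaluation identities at a fixed `q` -/

lemma evZ (G : TTGraph) (q : ℂ) :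
    (G.Z).eval q = (G.Zsame).eval q + (G.Zdif).eval q := by
  show (G.Z).eval q = (G.Z - G.Zdif).eval q + (G.Zdif).eval q
  rw [eval_sub]
  ring

lemma evP1 (A B : TTGraph) (q : ℂ) :
    q * ((A.par B).Zsame).eval q = (A.Zsame).eval q * (B.Zsame).eval q := by
  have := congrArg (eval q) (P1 A B)
  simpa using this

lemma evP2 (A B : TTGraph) (q : ℂ) :
    q * (q - 1) * ((A.par B).Zdif).eval q = (A.Zdif).eval q * (B.Zdif).eval q := by
  have := congrArg (eval q) (P2 A B)
  simpa using this

lemma evP3 (A B : TTGraph) (q : ℂ) :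
    q * ((A.ser B).Z).eval q = (A.Z).eval q * (B.Z).eval q := by
  have := congrArg (eval q) (P3 A B)
  simpa using this

lemma evP4 (A B : TTGraph) (q : ℂ) :
    ((A.ser B).Zsame).eval q = ((A.par B).Z).eval q := by
  have := congrArg (eval q) (P4 A B)
  simpa using this

lemma evZsameK2 (q : ℂ) : ((TTGraph.K2).Zsame).eval q = 0 := by
  rw [ZsameK2]; simp

lemma evZdifK2 (q : ℂ) : ((TTGraph.K2).Zdif).eval q = q^2 - q := by
  rw [ZdifK2]; simp

lemma evZK2 (q : ℂ) : ((TTGraph.K2).Z).eval q = q^2 - q := by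
  rw [P6]; simp

/-- The key series identity:
`q(q-1)·Zdif(A⋈B) = (q-1)(Zsame_A Zdif_B + Zdif_A Zsame_B) + (q-2) Zdif_A Zdif_B`. -/
lemma evSerZdif (A B : TTGraph) (q : ℂ) :
    q * (q - 1) * ((A.ser B).Zdif).eval q
      = (q - 1) * ((A.Zsame).eval q * (B.Zdif).eval q + (A.Zdif).eval q * (B.Zsame).eval q)
        + (q - 2) * ((A.Zdif).eval q * (B.Zdif).eval q) := by
  have hZser := evP3 A B q
  have hZA := evZ A q
  have hZB := evZ B q
  have hZser2 := evZ (A.ser B) q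
  have hzs_ser := evP4 A B q
  have hZpar := evZ (A.par B) q
  have hzs_par := evP1 A B q
  have hzd_par := evP2 A B q
  linear_combination (q-1)*hZser + (q-1)*((B.Z).eval q)*hZA
    + (q-1)*((A.Zsame).eval q + (A.Zdif).eval q)*hZB
    - q*(q-1)*hZser2 - q*(q-1)*hzs_ser - q*(q-1)*hZpar - (q-1)*hzs_par - hzd_par

/-! ### The main construction -/

def Goal (q : ℂ) : Prop :=
  ∃ H : TTGraph, H.IsSP ∧ H.NoSTEdge ∧
    (H.Zdif).eval q ≠ 0 ∧ (H.Zsame).eval q = -((H.Zdif).eval q)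

/-- Given `A, B` with nonvanishing `Zdif`s, `Zsame(A) ≠ 0`, and the series relation
forcing `Zdif(A⋈B) = 0`, the graph `A ∥ (B ⋈ K₂)` witnesses the goal. -/
lemma aux_construct (q : ℂ) (h0 : q ≠ 0) (h1 : q ≠ 1)
    (A B : TTGraph) (hA : A.IsSP) (hB : B.IsSP)
    (hzdA : (A.Zdif).eval q ≠ 0) (hzdB : (B.Zdif).eval q ≠ 0)
    (hzsA : (A.Zsame).eval q ≠ 0)
    (hE : (q - 1) * ((A.Zsame).eval q * (B.Zdif).eval q + (A.Zdif).eval q * (B.Zsame).eval q)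
        + (q - 2) * ((A.Zdif).eval q * (B.Zdif).eval q) = 0) :
    Goal q := by
  have hq1 : q - 1 ≠ 0 := sub_ne_zero.mpr h1
  set C := B.ser TTGraph.K2 with hC
  -- Zsame C = Zdif B
  have hzsC : (C.Zsame).eval q = (B.Zdif).eval q := by
    have h4 := evP4 B TTGraph.K2 q
    have hp := evZ (B.par TTGraph.K2) q
    have hp1 := evP1 B TTGraph.K2 q
    have hp2 := evP2 B TTGraph.K2 q
    rw [evZsameK2] at hp1
    rw [evZdifK2] at hp2
    -- q * zs(par) = 0, so zs(par) = 0
    have hzspar : ((B.par TTGraph.K2).Zsame).eval q = 0 := by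
      rcases mul_eq_zero.mp (by rw [hp1]; ring) with h | h
      · exact absurd h h0
      · exact h
    have hzdpar : ((B.par TTGraph.K2).Zdif).eval q = (B.Zdif).eval q := by
      have : q * (q-1) * ((B.par TTGraph.K2).Zdif).eval q = q * (q-1) * (B.Zdif).eval q := by
        rw [hp2]; ring
      exact mul_left_cancel₀ (mul_ne_zero h0 hq1) this
    rw [hC, h4, hp, hzspar, hzdpar, zero_add]
  have hZC : (C.Z).eval q = (q - 1) * (B.Z).eval q := by
    have h3 := evP3 B TTGraph.K2 q
    rw [evZK2] at h3
    apply mul_left_cancel₀ h0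
    rw [h3]; ring
  have hzdC : (C.Zdif).eval q = (q - 1) * (B.Zsame).eval q + (q - 2) * (B.Zdif).eval q := by
    have := evZ C q
    have hB2 := evZ B q
    rw [hzsC, hZC] at this
    linear_combination (q-1)*hB2 - this
  set W := A.par C with hW
  have hWsp : W.IsSP := TTGraph.IsSP.par hA (TTGraph.IsSP.ser hB TTGraph.IsSP.K2)
  have hzsW : q * (W.Zsame).eval q = (A.Zsame).eval q * (B.Zdif).eval q := by
    rw [hW]
    rw [evP1 A C q, hzsC]
  have hzdW : q * (q - 1) * (W.Zdif).eval q = (A.Zdif).eval q * (C.Zdif).eval q := by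
    rw [hW]; exact evP2 A C q
  have hZW : (W.Z).eval q = 0 := by
    have hsum := evZ W q
    have : q * (q - 1) * (W.Z).eval q = 0 := by
      rw [hsum]
      have : q * (q-1) * ((W.Zsame).eval q + (W.Zdif).eval q)
          = (q-1) * (q * (W.Zsame).eval q) + q * (q-1) * (W.Zdif).eval q := by ring
      rw [this, hzsW, hzdW, hzdC]
      linear_combination hE
    rcases mul_eq_zero.mp this with h | h
    · exfalso
      rcases mul_eq_zero.mp h with h' | h'
      · exact h0 h'
      · exact hq1 h'
    · exact h
  have hzdCne : (A.Zdif).eval q * (C.Zdif).eval q ≠ 0 := by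
    have : (A.Zdif).eval q * (C.Zdif).eval q = -((q-1) * ((A.Zsame).eval q * (B.Zdif).eval q)) := by
      rw [hzdC]
      linear_combination hE
    rw [this]
    intro hc
    rcases mul_eq_zero.mp (neg_eq_zero.mp hc) with h | h
    · exact hq1 h
    · rcases mul_eq_zero.mp h with h' | h'
      · exact hzsA h'
      · exact hzdB h'
  have hzdWne : (W.Zdif).eval q ≠ 0 := by
    intro hc
    apply hzdCne
    rw [← hzdW, hc]
    ring
  have hzsWval : (W.Zsame).eval q = -((W.Zdif).eval q) := by
    have := evZ W q
    rw [hZW] at this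
    linear_combination -this
  exact ⟨W, hWsp, noSTEdge_of_Zsame_ne W q (by rw [hzsWval]; exact neg_ne_zero.mpr hzdWne),
    hzdWne, hzsWval⟩

lemma main_induction (q : ℂ) (h0 : q ≠ 0) (h1 : q ≠ 1) (h2 : q ≠ 2) :
    ∀ (n : ℕ) (G : TTGraph), G.IsSP → Fintype.card G.E ≤ n →
      ((G.Zdif).eval q = 0 ∨ ((G.Zsame).eval q = 0 ∧ G.NoSTEdge) ∨ (G.Z).eval q = 0) →
      Goal q := by
  have hq1 : q - 1 ≠ 0 := sub_ne_zero.mpr h1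
  have hq2 : q - 2 ≠ 0 := sub_ne_zero.mpr h2
  have hK2 : q^2 - q ≠ 0 := by
    intro hc
    rcases mul_eq_zero.mp (show q * (q-1) = 0 by linear_combination hc) with h | h
    · exact h0 h
    · exact hq1 h
  intro n
  induction n using Nat.strong_induction_on with
  | _ n IH =>
  intro G hSP hle hBad
  cases hSP with
  | K2 =>
    exfalso
    rcases hBad with h | ⟨h, hno⟩ | h
    · rw [evZdifK2] at h; exact hK2 h
    · exact (hno ()).1 rfl
    · rw [evZK2] at h; exact hK2 h
  | @ser A B hA hB =>
    have hcardA : Fintype.card A.E < n := by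
      have hs : Fintype.card (A.ser B).E = Fintype.card A.E + Fintype.card B.E :=
        Fintype.card_sum
      have := sp_card_pos hB
      omega
    have hcardB : Fintype.card B.E < n := by
      have hs : Fintype.card (A.ser B).E = Fintype.card A.E + Fintype.card B.E :=
        Fintype.card_sum
      have := sp_card_pos hA
      omega
    by_cases hZ : ((A.ser B).Z).eval q = 0
    · -- Z(A)Z(B) = 0
      have := evP3 A B q
      rw [hZ, mul_zero] at this
      rcases mul_eq_zero.mp this.symm with h | h
      · exact IH _ hcardA A hA le_rfl (Or.inr (Or.inr h))
      · exact IH _ hcardB B hB le_rfl (Or.inr (Or.inr h))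
    by_cases hzs : ((A.ser B).Zsame).eval q = 0
    · -- Z(A ∥ B) = 0
      have hW : ((A.par B).Z).eval q = 0 := by rw [← evP4 A B q]; exact hzs
      by_cases hzdW : ((A.par B).Zdif).eval q = 0
      · have := evP2 A B q
        rw [hzdW, mul_zero] at this
        rcases mul_eq_zero.mp this.symm with h | h
        · exact IH _ hcardA A hA le_rfl (Or.inl h)
        · exact IH _ hcardB B hB le_rfl (Or.inl h)
      · refine ⟨A.par B, TTGraph.IsSP.par hA hB, ?_, hzdW, ?_⟩
        · apply noSTEdge_of_Zsame_ne _ q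
          have := evZ (A.par B) q
          rw [hW] at this
          intro hc
          rw [hc] at this
          exact hzdW (by linear_combination -this)
        · have := evZ (A.par B) q
          rw [hW] at this
          linear_combination -this
    -- remaining: Zdif(A⋈B) = 0
    have hzd : ((A.ser B).Zdif).eval q = 0 := by
      rcases hBad with h | ⟨h, _⟩ | h
      · exact h
      · exact absurd h hzs
      · exact absurd h hZ
    by_cases hzdA : (A.Zdif).eval q = 0
    · exact IH _ hcardA A hA le_rfl (Or.inl hzdA)
    by_cases hzdB : (B.Zdif).eval q = 0
    · exact IH _ hcardB B hB le_rfl (Or.inl hzdB)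
    -- the relation E
    have hE : (q - 1) * ((A.Zsame).eval q * (B.Zdif).eval q + (A.Zdif).eval q * (B.Zsame).eval q)
        + (q - 2) * ((A.Zdif).eval q * (B.Zdif).eval q) = 0 := by
      have := evSerZdif A B q
      rw [hzd, mul_zero] at this
      linear_combination -this
    -- some Zsame is nonzero
    by_cases hzsA : (A.Zsame).eval q ≠ 0
    · exact aux_construct q h0 h1 A B hA hB hzdA hzdB hzsA hE
    · push_neg at hzsA
      by_cases hzsB : (B.Zsame).eval q ≠ 0
      · -- symmetric: apply aux with roles swapped
        apply aux_construct q h0 h1 B A hB hA hzdB hzdA hzsB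
        linear_combination hE
      · push_neg at hzsB
        exfalso
        rw [hzsA, hzsB] at hE
        have : (q - 2) * ((A.Zdif).eval q * (B.Zdif).eval q) = 0 := by linear_combination hE
        rcases mul_eq_zero.mp this with h | h
        · exact hq2 h
        · rcases mul_eq_zero.mp h with h' | h'
          · exact hzdA h'
          · exact hzdB h'
  | @par A B hA hB =>
    have hcardA : Fintype.card A.E < n := by
      have hs : Fintype.card (A.par B).E = Fintype.card A.E + Fintype.card B.E :=
        Fintype.card_sum
      have := sp_card_pos hB
      omega
    have hcardB : Fintype.card B.E < n := by
      have hs : Fintype.card (A.par B).E = Fintype.card A.E + Fintype.card B.E :=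
        Fintype.card_sum
      have := sp_card_pos hA
      omega
    by_cases hzd : ((A.par B).Zdif).eval q = 0
    · have := evP2 A B q
      rw [hzd, mul_zero] at this
      rcases mul_eq_zero.mp this.symm with h | h
      · exact IH _ hcardA A hA le_rfl (Or.inl h)
      · exact IH _ hcardB B hB le_rfl (Or.inl h)
    rcases hBad with h | ⟨h, hno⟩ | h
    · exact absurd h hzd
    · -- Zsame(A∥B) = 0 with no st edge: recurse into the part with Zsame = 0
      have hzz := evP1 A B q
      rw [h, mul_zero] at hzz
      have hparts := noSTEdge_par_parts A B hno
      have hzdABparts : (A.Zdif).eval q ≠ 0 ∧ (B.Zdif).eval q ≠ 0 := by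
        constructor
        · intro hc
          exact hzd (by
            have := evP2 A B q
            rw [hc, zero_mul] at this
            rcases mul_eq_zero.mp this with h' | h'
            · rcases mul_eq_zero.mp h' with h'' | h''
              · exact absurd h'' h0
              · exact absurd h'' hq1
            · exact h')
        · intro hc
          exact hzd (by
            have := evP2 A B q
            rw [hc, mul_zero] at this
            rcases mul_eq_zero.mp this with h' | h'
            · rcases mul_eq_zero.mp h' with h'' | h''
              · exact absurd h'' h0
              · exact absurd h'' hq1
            · exact h')
      rcases mul_eq_zero.mp hzz.symm with hz | hz
      · exact IH _ hcardA A hA le_rfl (Or.inr (Or.inl ⟨hz, hparts.1⟩))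
      · exact IH _ hcardB B hB le_rfl (Or.inr (Or.inl ⟨hz, hparts.2⟩))
    · -- Z(A∥B) = 0, Zdif ≠ 0: G itself is the witness
      refine ⟨A.par B, TTGraph.IsSP.par hA hB, ?_, hzd, ?_⟩
      · apply noSTEdge_of_Zsame_ne _ q
        have := evZ (A.par B) q
        rw [h] at this
        intro hc
        rw [hc] at this
        exact hzd (by linear_combination -this)
      · have := evZ (A.par B) q
        rw [h] at this
        linear_combination -this

end SPaux

/-- **Theorem.** For `q ∉ {0,1,2}` the following are equivalent:
(i) some series-parallel graph has `Z(G;q) = 0`;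
(ii) some series-parallel graph with no edge joining its terminals has ratio
`R(G;q) = Z^same(G;q)/Z^dif(G;q) = -1` (with `Z^dif(G;q) ≠ 0`);
(iii) some series-parallel graph with no edge joining its terminals has ratio
`R(G;q) ∈ {0, -1, ∞}` as a point of the Riemann sphere. -/
theorem zero_iff_ratio_neg_one_iff_ratio_exceptional
    (q : ℂ) (h0 : q ≠ 0) (h1 : q ≠ 1) (h2 : q ≠ 2) :
    ((∃ G : TTGraph, G.IsSP ∧ (TTGraph.Z G).eval q = 0) ↔
      (∃ G : TTGraph, G.IsSP ∧ G.NoSTEdge ∧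
        (G.Zdif).eval q ≠ 0 ∧ (G.Zsame).eval q = -((G.Zdif).eval q))) ∧
    ((∃ G : TTGraph, G.IsSP ∧ G.NoSTEdge ∧
        (G.Zdif).eval q ≠ 0 ∧ (G.Zsame).eval q = -((G.Zdif).eval q)) ↔
      (∃ G : TTGraph, G.IsSP ∧ G.NoSTEdge ∧
        ¬((G.Zsame).eval q = 0 ∧ (G.Zdif).eval q = 0) ∧
        (G.Zsame).eval q * (G.Zdif).eval q * ((G.Zsame).eval q + (G.Zdif).eval q) = 0)) := by
  constructor
  · constructor
    · rintro ⟨G, hSP, hZ⟩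
      obtain ⟨H, a, b, c, d⟩ :=
        SPaux.main_induction q h0 h1 h2 (Fintype.card G.E) G hSP le_rfl (Or.inr (Or.inr hZ))
      exact ⟨H, a, b, c, d⟩
    · rintro ⟨G, hSP, hno, hzd, hzs⟩
      refine ⟨G, hSP, ?_⟩
      rw [SPaux.evZ G q, hzs]
      ring
  · constructor
    · rintro ⟨G, hSP, hno, hzd, hzs⟩
      refine ⟨G, hSP, hno, fun hc => hzd hc.2, ?_⟩
      rw [hzs]
      ring
    · rintro ⟨G, hSP, hno, hnz, hprod⟩
      have hBad : ((G.Zdif).eval q = 0 ∨ ((G.Zsame).eval q = 0 ∧ G.NoSTEdge)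
          ∨ (G.Z).eval q = 0) := by
        rcases mul_eq_zero.mp hprod with h | h
        · rcases mul_eq_zero.mp h with h' | h'
          · exact Or.inr (Or.inl ⟨h', hno⟩)
          · exact Or.inl h'
        · refine Or.inr (Or.inr ?_)
          rw [SPaux.evZ G q]
          exact h
      obtain ⟨H, a, b, c, d⟩ :=
        SPaux.main_induction q h0 h1 h2 (Fintype.card G.E) G hSP le_rfl hBad
      exact ⟨H, a, b, c, d⟩

end
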